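/- Let $(\nu_j)_{j\ge1}$ be independent random variables with $\nu_j \sim \mathrm{Beta}(1-\sigma, \alpha+j\sigma)$ where $\sigma\in[0,1)$ and $\alpha>-\sigma$, and define stick-breaking weights $\xi_h = \nu_h \prod_{j=1}^{h-1}(1-\nu_j)$. Then almost surely $\sum_{h=1}^\infty \xi_h = 1$. -/

import Mathlib

open MeasureTheory ProbabilityTheory Filter Topology

/-- The Beta distribution with parameters `a, b`, as a measure on `ℝ`. -/
noncomputable def betaMeasure (a b : ℝ) : Measure ℝ :=
  (volume.restrict (Set.Ioo (0 : ℝ) 1)).withDensity fun x =>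
    ENNReal.ofReal
      (Real.Gamma (a + b) / (Real.Gamma a * Real.Gamma b) * x ^ (a - 1) * (1 - x) ^ (b - 1))

lemma betaReal_eq_on {a b : ℝ} :
    ∀ x ∈ Set.Ioo (0:ℝ) 1, ((x:ℂ) ^ ((a:ℂ) - 1) * (1 - (x:ℂ)) ^ ((b:ℂ) - 1)) =
      ((x ^ (a - 1) * (1 - x) ^ (b - 1) : ℝ) : ℂ) := by
  intro x hx
  rw [show ((a:ℂ) - 1) = ((a - 1 : ℝ) : ℂ) by push_cast; ring,
    show ((b:ℂ) - 1) = ((b - 1 : ℝ) : ℂ) by push_cast; ring,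
    show (1 : ℂ) - (x:ℂ) = ((1 - x : ℝ) : ℂ) by push_cast; ring,
    ← Complex.ofReal_cpow hx.1.le, ← Complex.ofReal_cpow (by linarith [hx.2]),
    ← Complex.ofReal_mul]

lemma betaReal_integrable {a b : ℝ} (ha : 0 < a) (hb : 0 < b) :
    IntegrableOn (fun x : ℝ => x ^ (a - 1) * (1 - x) ^ (b - 1)) (Set.Ioo 0 1) := by
  have h := (Complex.betaIntegral_convergent (u := (a:ℂ)) (v := (b:ℂ)) (by simpa) (by simpa))
  rw [intervalIntegrable_iff_integrableOn_Ioc_of_le (by norm_num)] at h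
  have h2 : IntegrableOn (fun x : ℝ => (x:ℂ) ^ ((a:ℂ) - 1) * (1 - (x:ℂ)) ^ ((b:ℂ) - 1))
      (Set.Ioo 0 1) volume := h.mono_set Set.Ioo_subset_Ioc_self
  have h3 := h2.norm
  refine h3.congr ?_
  filter_upwards [ae_restrict_mem measurableSet_Ioo] with x hx
  rw [betaReal_eq_on x hx, Complex.norm_real, Real.norm_of_nonneg]
  exact mul_nonneg (Real.rpow_nonneg hx.1.le _) (Real.rpow_nonneg (by linarith [hx.2]) _)

lemma betaReal_integral {a b : ℝ} (ha : 0 < a) (hb : 0 < b) :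
    ∫ x in Set.Ioo (0:ℝ) 1, x ^ (a - 1) * (1 - x) ^ (b - 1) =
      Real.Gamma a * Real.Gamma b / Real.Gamma (a + b) := by
  have key := Complex.Gamma_mul_Gamma_eq_betaIntegral (s := (a:ℂ)) (t := (b:ℂ))
    (by simpa) (by simpa)
  have hβ : Complex.betaIntegral a b =
      ((∫ x in Set.Ioo (0:ℝ) 1, x ^ (a - 1) * (1 - x) ^ (b - 1) : ℝ) : ℂ) := by
    rw [Complex.betaIntegral, intervalIntegral.integral_of_le (by norm_num),
      integral_Ioc_eq_integral_Ioo]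
    rw [setIntegral_congr_fun measurableSet_Ioo betaReal_eq_on]
    exact integral_ofReal
  rw [hβ, ← Complex.ofReal_add, Complex.Gamma_ofReal, Complex.Gamma_ofReal,
    Complex.Gamma_ofReal, ← Complex.ofReal_mul, ← Complex.ofReal_mul] at key
  have := Complex.ofReal_injective key
  have hΓ : Real.Gamma (a + b) ≠ 0 := (Real.Gamma_pos_of_pos (by linarith)).ne'
  field_simp
  linarith [this]

lemma betaDens_measurable (a b : ℝ) : Measurable (fun x : ℝ =>
    ENNReal.ofReal
      (Real.Gamma (a + b) / (Real.Gamma a * Real.Gamma b) * x ^ (a - 1) * (1 - x) ^ (b - 1))) := by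
  fun_prop

lemma betaMeasure_compl_Ioo (a b : ℝ) : _root_.betaMeasure a b (Set.Ioo (0:ℝ) 1)ᶜ = 0 := by
  rw [_root_.betaMeasure, withDensity_apply _ measurableSet_Ioo.compl,
    Measure.restrict_restrict measurableSet_Ioo.compl]
  simp

lemma lintegral_one_sub_betaMeasure {a b : ℝ} (ha : 0 < a) (hb : 0 < b) :
    ∫⁻ x, ENNReal.ofReal (1 - x) ∂(_root_.betaMeasure a b) = ENNReal.ofReal (b / (a + b)) := by
  have hΓa := Real.Gamma_pos_of_pos ha
  have hΓb := Real.Gamma_pos_of_pos hb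
  have hΓab := Real.Gamma_pos_of_pos (show (0:ℝ) < a + b by linarith)
  set C : ℝ := Real.Gamma (a + b) / (Real.Gamma a * Real.Gamma b) with hC
  have hCpos : 0 < C := by positivity
  rw [_root_.betaMeasure, lintegral_withDensity_eq_lintegral_mul _ (betaDens_measurable a b)
    (by fun_prop : Measurable fun x : ℝ => ENNReal.ofReal (1 - x))]
  simp only [Pi.mul_apply, ← hC]
  have h1 : ∫⁻ x in Set.Ioo (0:ℝ) 1,
      (ENNReal.ofReal (C * x ^ (a - 1) * (1 - x) ^ (b - 1)) * ENNReal.ofReal (1 - x)) =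
      ∫⁻ x in Set.Ioo (0:ℝ) 1, ENNReal.ofReal (C * (x ^ (a - 1) * (1 - x) ^ (b + 1 - 1))) := by
    refine setLIntegral_congr_fun measurableSet_Ioo ?_
    intro x hx
    beta_reduce
    rw [← ENNReal.ofReal_mul (by
      exact mul_nonneg (mul_nonneg hCpos.le (Real.rpow_nonneg hx.1.le _))
        (Real.rpow_nonneg (by linarith [hx.2]) _))]
    congr 1
    have h1x : (0:ℝ) < 1 - x := by linarith [hx.2]
    rw [show b + 1 - 1 = (b - 1) + 1 by ring, Real.rpow_add_one h1x.ne']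
    ring
  rw [h1, ← ofReal_integral_eq_lintegral_ofReal]
  · rw [MeasureTheory.integral_const_mul, betaReal_integral ha (by linarith),
      Real.Gamma_add_one hb.ne', show a + (b + 1) = (a + b) + 1 by ring,
      Real.Gamma_add_one (by positivity)]
    congr 1
    rw [hC]
    field_simp
  · exact (betaReal_integrable ha (by linarith)).const_mul C
  · filter_upwards [ae_restrict_mem measurableSet_Ioo] with x hx
    exact mul_nonneg hCpos.le (mul_nonneg (Real.rpow_nonneg hx.1.le _)
      (Real.rpow_nonneg (by linarith [hx.2]) _))

lemma py_prod_tendsto_zero {σ α : ℝ} (hσ0 : 0 ≤ σ) (hσ1 : σ < 1) (hα : -σ < α) :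
    Tendsto (fun n => ∏ j ∈ Finset.range n, ((α + (j + 1) * σ) / (1 + α + j * σ)))
      atTop (𝓝 0) := by
  have hα1 : (0:ℝ) < 1 + α := by linarith
  set c : ℕ → ℝ := fun j => (1 - σ) / (1 + α + j * σ) with hc
  have hden : ∀ j : ℕ, (0:ℝ) < 1 + α + j * σ := fun j => by positivity
  have hcpos : ∀ j : ℕ, 0 < c j := fun j => div_pos (by linarith) (hden j)
  have ht : ∀ j : ℕ, (α + (j + 1) * σ) / (1 + α + j * σ) = 1 - c j := by
    intro j
    rw [hc, eq_sub_iff_add_eq, ← add_div, div_eq_one_iff_eq (hden j).ne']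
    ring
  have htnn : ∀ j : ℕ, 0 ≤ (α + (j + 1) * σ) / (1 + α + j * σ) := by
    intro j
    have hnum : (0:ℝ) < α + (j + 1) * σ := by nlinarith [Nat.cast_nonneg (α := ℝ) j]
    positivity
  have hbound : ∀ j : ℕ, (1 - σ) / (1 + α + σ) * (1 / (j + 1)) ≤ c j := by
    intro j
    rw [hc, div_mul_div_comm, mul_one]
    apply div_le_div_of_nonneg_left (by linarith) (hden j)
    nlinarith [Nat.cast_nonneg (α := ℝ) j]
  have hS : Tendsto (fun n => ∑ j ∈ Finset.range n, c j) atTop atTop := by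
    apply tendsto_atTop_mono (fun n => Finset.sum_le_sum fun j _ => hbound j)
    rw [show (fun n => ∑ j ∈ Finset.range n, (1 - σ) / (1 + α + σ) * (1 / (j + 1)))
        = fun n => (1 - σ) / (1 + α + σ) * ∑ j ∈ Finset.range n, (1 / ((j:ℝ) + 1)) by
      funext n; rw [Finset.mul_sum]]
    exact Tendsto.const_mul_atTop (div_pos (by linarith) (by linarith))
      Real.tendsto_sum_range_one_div_nat_succ_atTop
  have hexp : Tendsto (fun n => Real.exp (-∑ j ∈ Finset.range n, c j)) atTop (𝓝 0) :=
    Real.tendsto_exp_atBot.comp (tendsto_neg_atBot_iff.mpr hS)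
  refine tendsto_of_tendsto_of_tendsto_of_le_of_le tendsto_const_nhds hexp ?_ ?_
  · exact fun n => Finset.prod_nonneg fun j _ => htnn j
  · intro n
    calc ∏ j ∈ Finset.range n, ((α + (j + 1) * σ) / (1 + α + j * σ))
        ≤ ∏ j ∈ Finset.range n, Real.exp (-c j) := by
          refine Finset.prod_le_prod (fun j _ => htnn j) (fun j _ => ?_)
          rw [ht j, sub_eq_add_neg, add_comm]
          exact Real.add_one_le_exp (-c j)
      _ = Real.exp (-∑ j ∈ Finset.range n, c j) := by
          rw [← Real.exp_sum, Finset.sum_neg_distrib]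

/-- Stick-breaking for the Pitman–Yor process: with independent
`ν_j ∼ Beta(1 - σ, α + j σ)` (here `ν j` plays the role of `ν_{j+1}`), `σ ∈ [0,1)`,
`α > -σ`, the stick-breaking weights `ξ_h = ν_h ∏_{j<h} (1 - ν_j)` sum to one
almost surely. -/
theorem py_stick_breaking_sums_to_one
    {Ω : Type*} [MeasurableSpace Ω] (P : Measure Ω) [IsProbabilityMeasure P]
    (σ α : ℝ) (hσ0 : 0 ≤ σ) (hσ1 : σ < 1) (hα : -σ < α)
    (ν : ℕ → Ω → ℝ) (hmeas : ∀ j, Measurable (ν j))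
    (hindep : iIndepFun ν P)
    (hlaw : ∀ j : ℕ, Measure.map (ν j) P = _root_.betaMeasure (1 - σ) (α + (j + 1) * σ))
    (ξ : ℕ → Ω → ℝ)
    (hξ : ∀ h ω, ξ h ω = ν h ω * ∏ j ∈ Finset.range h, (1 - ν j ω)) :
    ∀ᵐ ω ∂P, ∑' h : ℕ, ξ h ω = 1 := by
  have ha : (0:ℝ) < 1 - σ := by linarith
  have hb : ∀ j : ℕ, (0:ℝ) < α + (j + 1) * σ := by
    intro j
    nlinarith [Nat.cast_nonneg (α := ℝ) j]
  -- almost surely each ν j lies in (0,1)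
  have hae : ∀ᵐ ω ∂P, ∀ j, ν j ω ∈ Set.Ioo (0:ℝ) 1 := by
    rw [ae_all_iff]
    intro j
    have h0 : P ((ν j) ⁻¹' (Set.Ioo (0:ℝ) 1)ᶜ) = 0 := by
      have h := betaMeasure_compl_Ioo (1 - σ) (α + (j + 1) * σ)
      rw [← hlaw j, Measure.map_apply (hmeas j) measurableSet_Ioo.compl] at h
      exact h
    rw [ae_iff]
    exact h0
  -- the transformed variables
  set g : ℕ → Ω → ENNReal := fun j ω => ENNReal.ofReal (1 - ν j ω) with hgdef
  have hgmeas : ∀ j, Measurable (g j) := by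
    intro j
    exact ENNReal.measurable_ofReal.comp (measurable_const.sub (hmeas j))
  have hgindep : iIndepFun g P := by
    exact hindep.comp (fun _ x => ENNReal.ofReal (1 - x))
      (fun _ => by fun_prop)
  have hμ : ∀ j : ℕ, ∫⁻ ω, g j ω ∂P
      = ENNReal.ofReal ((α + (j + 1) * σ) / (1 + α + j * σ)) := by
    intro j
    have : ∫⁻ ω, g j ω ∂P = ∫⁻ x, ENNReal.ofReal (1 - x) ∂(Measure.map (ν j) P) := by
      rw [lintegral_map (by fun_prop) (hmeas j)]
    rw [this, hlaw j, lintegral_one_sub_betaMeasure ha (hb j)]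
    congr 2
    ring
  -- the partial products, their expectations
  set F : ℕ → Ω → ENNReal := fun n ω => ∏ j ∈ Finset.range n, g j ω with hFdef
  have hFmeas : ∀ n, Measurable (F n) :=
    fun n => Finset.measurable_prod _ (fun j _ => hgmeas j)
  have hQ : ∀ n, ∫⁻ ω, F n ω ∂P
      = ∏ j ∈ Finset.range n, ENNReal.ofReal ((α + (j + 1) * σ) / (1 + α + j * σ)) := by
    intro n
    induction n with
    | zero => simp [hFdef]
    | succ n ih =>
      have hip : IndepFun (F n) (g n) P := by
        have h := hgindep.indepFun_prod_range_succ hgmeas n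
        have : (∏ j ∈ Finset.range n, g j) = F n := by
          funext ω
          simp [hFdef]
        rwa [this] at h
      have hsplit : (fun ω => F (n + 1) ω) = (F n) * (g n) := by
        funext ω
        simp [hFdef, Finset.prod_range_succ]
      have hl := lintegral_mul_eq_lintegral_mul_lintegral_of_indepFun''
          (hFmeas n).aemeasurable (hgmeas n).aemeasurable hip
      have heq : ∫⁻ ω, F (n + 1) ω ∂P = ∫⁻ ω, F n ω * g n ω ∂P := by
        apply lintegral_congr
        intro ω
        simp [hFdef, Finset.prod_range_succ]
      rw [heq, hl, ih, hμ n, Finset.prod_range_succ]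
  have hQ0 : Tendsto (fun n => ∫⁻ ω, F n ω ∂P) atTop (𝓝 0) := by
    have h1 := ENNReal.tendsto_ofReal (py_prod_tendsto_zero hσ0 hσ1 hα)
    rw [ENNReal.ofReal_zero] at h1
    refine h1.congr fun n => ?_
    rw [hQ n, ← ENNReal.ofReal_prod_of_nonneg]
    intro j _
    have := hb j
    have hden : (0:ℝ) < 1 + α + j * σ := by nlinarith [Nat.cast_nonneg (α := ℝ) j]
    positivity
  -- the a.e. limit of the products is 0
  set L : Ω → ENNReal := fun ω => ⨅ n, F n ω with hLdef
  have hLmeas : Measurable L := Measurable.iInf hFmeas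
  have hL0 : ∀ᵐ ω ∂P, L ω = 0 := by
    have hint : ∫⁻ ω, L ω ∂P = 0 := by
      refine le_antisymm ?_ zero_le
      exact ge_of_tendsto' hQ0 (fun n => lintegral_mono fun ω => iInf_le (fun n => F n ω) n)
    exact (lintegral_eq_zero_iff hLmeas).mp hint
  -- conclude pointwise
  filter_upwards [hae, hL0] with ω hω hLω
  set r : ℕ → ℝ := fun n => ∏ j ∈ Finset.range n, (1 - ν j ω) with hrdef
  have hr_nonneg : ∀ j : ℕ, (0:ℝ) ≤ 1 - ν j ω := fun j => by linarith [(hω j).2]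
  have hFr : ∀ n, F n ω = ENNReal.ofReal (r n) := by
    intro n
    rw [hrdef, ENNReal.ofReal_prod_of_nonneg (fun j _ => hr_nonneg j)]
  have hanti : Antitone (fun n => F n ω) := by
    apply antitone_nat_of_succ_le
    intro n
    calc F (n + 1) ω = F n ω * g n ω := by simp [hFdef, Finset.prod_range_succ]
      _ ≤ F n ω * 1 := by
          apply mul_le_mul_right
          rw [hgdef]
          exact ENNReal.ofReal_le_one.mpr (by linarith [(hω n).1])
      _ = F n ω := mul_one _
  have hFtend : Tendsto (fun n => F n ω) atTop (𝓝 0) := by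
    have h := tendsto_atTop_iInf hanti
    have h0 : (⨅ n, F n ω) = (0 : ENNReal) := hLω
    rwa [h0] at h
  have hrtend : Tendsto r atTop (𝓝 0) := by
    have h2 := (ENNReal.tendsto_toReal (a := 0) (by simp)).comp hFtend
    simp only [ENNReal.toReal_zero] at h2
    refine h2.congr fun n => ?_
    rw [Function.comp_apply, hFr n, ENNReal.toReal_ofReal]
    exact Finset.prod_nonneg fun j _ => hr_nonneg j
  have hpartial : ∀ n, ∑ h ∈ Finset.range n, ξ h ω = 1 - r n := by
    intro n
    induction n with
    | zero => simp [hrdef]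
    | succ n ih =>
      rw [Finset.sum_range_succ, ih, hξ n ω, hrdef]
      simp only [Finset.prod_range_succ]
      ring_nf
  have hsum : HasSum (fun h => ξ h ω) 1 := by
    rw [hasSum_iff_tendsto_nat_of_nonneg]
    · have : Tendsto (fun n => 1 - r n) atTop (𝓝 (1 - 0)) :=
        (tendsto_const_nhds).sub hrtend
      rw [sub_zero] at this
      refine this.congr fun n => (hpartial n).symm
    · intro h
      rw [hξ h ω]
      exact mul_nonneg (hω h).1.le (Finset.prod_nonneg fun j _ => hr_nonneg j)
  exact hsum.tsum_eq
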